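/- Suppose 0 < M < 1 and q ≥ 0. If u ∈ 𝔸_M is a ground state (ℰ_q[u] ≤ ℰ_q[v] for all v ∈ 𝔸_M) with u₁(x) > 0 and u₋₁(x) > 0 for all x, then q ∫ u₀² ≥ β_s ∫ u₀²(u₁ − u₋₁)²(2 + u₀²/(u₁ u₋₁)) + (1/2) ∫ ( S(u₁, u₀)/u₁² + S(u₋₁, u₀)/u₋₁² ), and in particular the integrands on the right-hand side are integrable. -/

import Mathlib

open MeasureTheory
open scoped RealInnerProductSpace

noncomputable section

abbrev E3 := EuclideanSpace ℝ (Fin 3)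

/-- Pointwise squared norm `|u|² = u₁² + u₀² + u₋₁²` of a triple of functions. -/
def nsq (u1 u0 um1 : E3 → ℝ) (x : E3) : ℝ := u1 x ^ 2 + u0 x ^ 2 + um1 x ^ 2

/-- The energy functional `ℰ_q[u]`. -/
def energy (V : E3 → ℝ) (βn βs q : ℝ) (u1 u0 um1 : E3 → ℝ) : ℝ :=
  ∫ x : E3,
    (‖gradient u1 x‖ ^ 2 + ‖gradient u0 x‖ ^ 2 + ‖gradient um1 x‖ ^ 2
      + V x * nsq u1 u0 um1 x
      + βn * (nsq u1 u0 um1 x) ^ 2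
      + βs * (2 * u0 x ^ 2 * (u1 x - um1 x) ^ 2 + (u1 x ^ 2 - um1 x ^ 2) ^ 2)
      + q * (u1 x ^ 2 + um1 x ^ 2))

/-- The admissible class `𝔸_M`: triples of nonnegative `C¹` functions with the
required integrability and the constraints `𝒩[u] = 1`, `ℳ[u] = M`. -/
structure Admissible (V : E3 → ℝ) (M : ℝ) (u1 u0 um1 : E3 → ℝ) : Prop where
  smooth1 : ContDiff ℝ 1 u1
  smooth0 : ContDiff ℝ 1 u0
  smoothm1 : ContDiff ℝ 1 um1
  nonneg1 : ∀ x, 0 ≤ u1 x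
  nonneg0 : ∀ x, 0 ≤ u0 x
  nonnegm1 : ∀ x, 0 ≤ um1 x
  l2_1 : Integrable (fun x => u1 x ^ 2)
  l2_0 : Integrable (fun x => u0 x ^ 2)
  l2_m1 : Integrable (fun x => um1 x ^ 2)
  grad2_1 : Integrable (fun x => ‖gradient u1 x‖ ^ 2)
  grad2_0 : Integrable (fun x => ‖gradient u0 x‖ ^ 2)
  grad2_m1 : Integrable (fun x => ‖gradient um1 x‖ ^ 2)
  l4_1 : Integrable (fun x => u1 x ^ 4)
  l4_0 : Integrable (fun x => u0 x ^ 4)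
  l4_m1 : Integrable (fun x => um1 x ^ 4)
  pot : Integrable (fun x => V x * nsq u1 u0 um1 x)
  mass : ∫ x : E3, nsq u1 u0 um1 x = 1
  magnetization : ∫ x : E3, (u1 x ^ 2 - um1 x ^ 2) = M

/-- Hypotheses on the trap potential `V`: measurable, nonnegative, locally bounded,
and tending to infinity at infinity. -/
structure TrapPotential (V : E3 → ℝ) : Prop where
  meas : Measurable V
  nonneg : ∀ x, 0 ≤ V x
  bddOnBalls : ∀ r : ℝ, ∃ C : ℝ, ∀ x : E3, ‖x‖ ≤ r → V x ≤ C
  tendsToInfty : ∀ C : ℝ, 0 < C → ∃ R : ℝ, 0 < R ∧ ∀ x : E3, R ≤ ‖x‖ → C ≤ V x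

/-- `u` is a ground state: admissible and minimizes the energy over `𝔸_M`. -/
def IsGroundState (V : E3 → ℝ) (βn βs q M : ℝ) (u1 u0 um1 : E3 → ℝ) : Prop :=
  Admissible V M u1 u0 um1 ∧
    ∀ v1 v0 vm1 : E3 → ℝ, Admissible V M v1 v0 vm1 →
      energy V βn βs q u1 u0 um1 ≤ energy V βn βs q v1 v0 vm1

/-- `S(f,g) = |f ∇g − g ∇f|²`. -/
def Sfun (f g : E3 → ℝ) (x : E3) : ℝ := ‖f x • gradient g x - g x • gradient f x‖ ^ 2

lemma inner_expand (p q : ℝ) (X Y : E3) :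
    ‖p • X + q • Y‖ ^ 2 = p ^ 2 * ‖X‖ ^ 2 + 2 * p * q * ⟪X, Y⟫ + q ^ 2 * ‖Y‖ ^ 2 := by
  rw [norm_add_sq_real, real_inner_smul_left, real_inner_smul_right, norm_smul, norm_smul]
  simp [mul_pow, sq_abs]
  ring

lemma inner_expand_sub (p q : ℝ) (X Y : E3) :
    ‖p • X - q • Y‖ ^ 2 = p ^ 2 * ‖X‖ ^ 2 - 2 * p * q * ⟪X, Y⟫ + q ^ 2 * ‖Y‖ ^ 2 := by
  rw [sub_eq_add_neg, ← neg_smul, inner_expand]; ring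

lemma contDiff_grad_continuous {f : E3 → ℝ} (hf : ContDiff ℝ 1 f) :
    Continuous (fun x => gradient f x) :=
  (InnerProductSpace.toDual ℝ E3).symm.continuous.comp (hf.continuous_fderiv one_ne_zero)

lemma hasGradientAt_sqrt_comb {a b : E3 → ℝ} (ha : ContDiff ℝ 1 a) (hb : ContDiff ℝ 1 b)
    (ε : ℝ) (x : E3) (hx : 0 < a x ^ 2 + ε / 2 * b x ^ 2) :
    HasGradientAt (fun y => Real.sqrt (a y ^ 2 + ε / 2 * b y ^ 2))
      ((Real.sqrt (a x ^ 2 + ε / 2 * b x ^ 2))⁻¹ •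
        (a x • gradient a x + (ε / 2 * b x) • gradient b x)) x := by
  have hda : HasFDerivAt a (fderiv ℝ a x) x :=
    (ha.differentiable one_ne_zero x).hasFDerivAt
  have hdb : HasFDerivAt b (fderiv ℝ b x) x :=
    (hb.differentiable one_ne_zero x).hasFDerivAt
  have h1 : HasFDerivAt (fun y => a y ^ 2 + ε / 2 * b y ^ 2)
      ((a x • fderiv ℝ a x + a x • fderiv ℝ a x) +
        (ε / 2) • (b x • fderiv ℝ b x + b x • fderiv ℝ b x)) x := by
    have h2 : HasFDerivAt (fun y => a y ^ 2) (a x • fderiv ℝ a x + a x • fderiv ℝ a x) x := by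
      simpa [pow_two] using hda.fun_mul hda
    have h3 : HasFDerivAt (fun y => ε / 2 * b y ^ 2)
        ((ε / 2) • (b x • fderiv ℝ b x + b x • fderiv ℝ b x)) x := by
      exact HasFDerivAt.const_mul (by simpa [pow_two] using hdb.fun_mul hdb) (ε / 2)
    exact h2.add h3
  have h4 := h1.sqrt hx.ne'
  have h5 := h4.hasGradientAt
  convert h5 using 1
  simp only [_root_.map_smul, map_add]
  have e1 : (InnerProductSpace.toDual ℝ E3).symm (fderiv ℝ a x) = gradient a x := rfl
  have e2 : (InnerProductSpace.toDual ℝ E3).symm (fderiv ℝ b x) = gradient b x := rfl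
  rw [e1, e2]
  have hs : Real.sqrt (a x ^ 2 + ε / 2 * b x ^ 2) ≠ 0 := by positivity
  set s := Real.sqrt (a x ^ 2 + ε / 2 * b x ^ 2) with hsdef
  match_scalars
  · field_simp
    ring
  · field_simp
    ring

lemma contDiff_sqrt_comb {a b : E3 → ℝ} (ha : ContDiff ℝ 1 a) (hb : ContDiff ℝ 1 b)
    (ε : ℝ) (hpos : ∀ x, 0 < a x ^ 2 + ε / 2 * b x ^ 2) :
    ContDiff ℝ 1 (fun y => Real.sqrt (a y ^ 2 + ε / 2 * b y ^ 2)) := by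
  have hw : ContDiff ℝ 1 (fun y => a y ^ 2 + ε / 2 * b y ^ 2) :=
    (ha.pow 2).add (contDiff_const.mul (hb.pow 2))
  rw [contDiff_iff_contDiffAt]
  intro x
  exact (hw.contDiffAt).sqrt (hpos x).ne'

lemma normGradSq_sqrt_comb {a b : E3 → ℝ} (ha : ContDiff ℝ 1 a) (hb : ContDiff ℝ 1 b)
    (ε : ℝ) (x : E3) (hx : 0 < a x ^ 2 + ε / 2 * b x ^ 2) :
    ‖gradient (fun y => Real.sqrt (a y ^ 2 + ε / 2 * b y ^ 2)) x‖ ^ 2 =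
      ‖gradient a x‖ ^ 2 + ε / 2 * ‖gradient b x‖ ^ 2 -
        ε / 2 * ‖a x • gradient b x - b x • gradient a x‖ ^ 2 /
          (a x ^ 2 + ε / 2 * b x ^ 2) := by
  rw [(hasGradientAt_sqrt_comb ha hb ε x hx).gradient]
  rw [norm_smul, Real.norm_eq_abs, abs_of_nonneg (inv_nonneg.2 (Real.sqrt_nonneg _)), mul_pow,
    inner_expand, inner_expand_sub]
  have hs2 : Real.sqrt (a x ^ 2 + ε / 2 * b x ^ 2) ^ 2 = a x ^ 2 + ε / 2 * b x ^ 2 :=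
    Real.sq_sqrt hx.le
  rw [inv_pow, hs2, real_inner_comm (gradient b x) (gradient a x)]
  have hne : a x ^ 2 + ε / 2 * b x ^ 2 ≠ 0 := hx.ne'
  set w := a x ^ 2 + ε / 2 * b x ^ 2 with hwdef
  field_simp
  ring

lemma hasGradientAt_const_mul {b : E3 → ℝ} (hb : ContDiff ℝ 1 b) (c : ℝ) (x : E3) :
    HasGradientAt (fun y => c * b y) (c • gradient b x) x := by
  have hdb : HasFDerivAt b (fderiv ℝ b x) x := (hb.differentiable one_ne_zero x).hasFDerivAt
  have h := (hdb.const_mul c).hasGradientAt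
  convert h using 1
  rw [_root_.map_smul]
  rfl

def V1f (a b : E3 → ℝ) (ε : ℝ) : E3 → ℝ := fun x => Real.sqrt (a x ^ 2 + ε / 2 * b x ^ 2)

def V0f (b : E3 → ℝ) (ε : ℝ) : E3 → ℝ := fun x => Real.sqrt (1 - ε) * b x

lemma wpos {a : E3 → ℝ} (b : E3 → ℝ) {ε : ℝ} (ha : ∀ x, 0 < a x) (hε : 0 ≤ ε) (x : E3) :
    0 < a x ^ 2 + ε / 2 * b x ^ 2 := by
  have h1 := ha x
  have h2 : 0 ≤ ε / 2 * b x ^ 2 := by positivity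
  nlinarith

lemma V1f_sq {a : E3 → ℝ} {b : E3 → ℝ} {ε : ℝ} (ha : ∀ x, 0 < a x) (hε : 0 ≤ ε) (x : E3) :
    V1f a b ε x ^ 2 = a x ^ 2 + ε / 2 * b x ^ 2 :=
  Real.sq_sqrt (wpos b ha hε x).le

lemma V0f_sq {b : E3 → ℝ} {ε : ℝ} (hε : ε ≤ 1) (x : E3) :
    V0f b ε x ^ 2 = (1 - ε) * b x ^ 2 := by
  rw [V0f, mul_pow, Real.sq_sqrt (by linarith : (0:ℝ) ≤ 1 - ε)]

lemma nsq_V {a b c : E3 → ℝ} {ε : ℝ} (ha : ∀ x, 0 < a x) (hc : ∀ x, 0 < c x)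
    (hε0 : 0 ≤ ε) (hε1 : ε ≤ 1) (x : E3) :
    nsq (V1f a b ε) (V0f b ε) (V1f c b ε) x = nsq a b c x := by
  rw [nsq, nsq, V1f_sq ha hε0, V1f_sq hc hε0, V0f_sq hε1]; ring

lemma V1f_ge {a : E3 → ℝ} {b : E3 → ℝ} {ε : ℝ} (ha : ∀ x, 0 < a x) (hε : 0 ≤ ε) (x : E3) :
    a x ≤ V1f a b ε x := by
  rw [V1f]
  have : a x = Real.sqrt (a x ^ 2) := by
    rw [Real.sqrt_sq (ha x).le]
  rw [this]
  apply Real.sqrt_le_sqrt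
  nlinarith [sq_nonneg (b x), (ha x).le]

lemma grad_V0f {b : E3 → ℝ} (hb : ContDiff ℝ 1 b) (ε : ℝ) (x : E3) :
    gradient (V0f b ε) x = Real.sqrt (1 - ε) • gradient b x :=
  (hasGradientAt_const_mul hb (Real.sqrt (1 - ε)) x).gradient

lemma normGradSq_V0f {b : E3 → ℝ} (hb : ContDiff ℝ 1 b) {ε : ℝ} (hε : ε ≤ 1) (x : E3) :
    ‖gradient (V0f b ε) x‖ ^ 2 = (1 - ε) * ‖gradient b x‖ ^ 2 := by
  rw [grad_V0f hb ε x, norm_smul, Real.norm_eq_abs, abs_of_nonneg (Real.sqrt_nonneg _), mul_pow,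
    Real.sq_sqrt (by linarith : (0:ℝ) ≤ 1 - ε)]

lemma admissible_family {Vp : E3 → ℝ} {M : ℝ} {a b c : E3 → ℝ}
    (hA : Admissible Vp M a b c) (ha : ∀ x, 0 < a x) (hc : ∀ x, 0 < c x)
    {ε : ℝ} (hε0 : 0 < ε) (hε1 : ε ≤ 1) :
    Admissible Vp M (V1f a b ε) (V0f b ε) (V1f c b ε) := by
  have hpos1 : ∀ x, 0 < a x ^ 2 + ε / 2 * b x ^ 2 := wpos b ha hε0.le
  have hposm : ∀ x, 0 < c x ^ 2 + ε / 2 * b x ^ 2 := wpos b hc hε0.le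
  have hsm1 : ContDiff ℝ 1 (V1f a b ε) := contDiff_sqrt_comb hA.smooth1 hA.smooth0 ε hpos1
  have hsmm : ContDiff ℝ 1 (V1f c b ε) := contDiff_sqrt_comb hA.smoothm1 hA.smooth0 ε hposm
  have hsm0 : ContDiff ℝ 1 (V0f b ε) := contDiff_const.mul hA.smooth0
  have hl2a : Integrable (fun x => V1f a b ε x ^ 2) := by
    have : (fun x => V1f a b ε x ^ 2) = fun x => a x ^ 2 + ε / 2 * b x ^ 2 :=
      funext fun x => V1f_sq ha hε0.le x
    rw [this]
    exact hA.l2_1.add (hA.l2_0.const_mul (ε / 2))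
  have hl2c : Integrable (fun x => V1f c b ε x ^ 2) := by
    have : (fun x => V1f c b ε x ^ 2) = fun x => c x ^ 2 + ε / 2 * b x ^ 2 :=
      funext fun x => V1f_sq hc hε0.le x
    rw [this]
    exact hA.l2_m1.add (hA.l2_0.const_mul (ε / 2))
  have hgrad1 : Integrable (fun x => ‖gradient (V1f a b ε) x‖ ^ 2) := by
    apply Integrable.mono' (hA.grad2_1.add hA.grad2_0)
      (((contDiff_grad_continuous hsm1).norm.pow 2).aestronglyMeasurable)
    filter_upwards with x
    simp only [Pi.pow_apply]
    rw [Real.norm_eq_abs, abs_of_nonneg (by positivity)]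
    rw [show V1f a b ε = fun y => Real.sqrt (a y ^ 2 + ε / 2 * b y ^ 2) from rfl,
      normGradSq_sqrt_comb hA.smooth1 hA.smooth0 ε x (hpos1 x)]
    have h1 : 0 ≤ ε / 2 * ‖a x • gradient b x - b x • gradient a x‖ ^ 2 /
        (a x ^ 2 + ε / 2 * b x ^ 2) := by positivity
    have h2 : ε / 2 * ‖gradient b x‖ ^ 2 ≤ ‖gradient b x‖ ^ 2 := by nlinarith [sq_nonneg ‖gradient b x‖]
    simp only [Pi.add_apply]
    linarith
  have hgradm : Integrable (fun x => ‖gradient (V1f c b ε) x‖ ^ 2) := by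
    apply Integrable.mono' (hA.grad2_m1.add hA.grad2_0)
      (((contDiff_grad_continuous hsmm).norm.pow 2).aestronglyMeasurable)
    filter_upwards with x
    simp only [Pi.pow_apply]
    rw [Real.norm_eq_abs, abs_of_nonneg (by positivity)]
    rw [show V1f c b ε = fun y => Real.sqrt (c y ^ 2 + ε / 2 * b y ^ 2) from rfl,
      normGradSq_sqrt_comb hA.smoothm1 hA.smooth0 ε x (hposm x)]
    have h1 : 0 ≤ ε / 2 * ‖c x • gradient b x - b x • gradient c x‖ ^ 2 /
        (c x ^ 2 + ε / 2 * b x ^ 2) := by positivity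
    have h2 : ε / 2 * ‖gradient b x‖ ^ 2 ≤ ‖gradient b x‖ ^ 2 := by nlinarith [sq_nonneg ‖gradient b x‖]
    simp only [Pi.add_apply]
    linarith
  have hgrad0 : Integrable (fun x => ‖gradient (V0f b ε) x‖ ^ 2) := by
    have : (fun x => ‖gradient (V0f b ε) x‖ ^ 2) = fun x => (1 - ε) * ‖gradient b x‖ ^ 2 :=
      funext fun x => normGradSq_V0f hA.smooth0 hε1 x
    rw [this]
    exact hA.grad2_0.const_mul (1 - ε)
  have hl4a : Integrable (fun x => V1f a b ε x ^ 4) := by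
    apply Integrable.mono' ((hA.l4_1.const_mul 2).add hA.l4_0)
      (((hsm1.continuous.pow 4)).aestronglyMeasurable)
    filter_upwards with x
    simp only [Pi.pow_apply]
    rw [Real.norm_eq_abs, abs_of_nonneg (by positivity)]
    have h1 : V1f a b ε x ^ 4 = (a x ^ 2 + ε / 2 * b x ^ 2) ^ 2 := by
      rw [show (4:ℕ) = 2 * 2 from rfl, pow_mul, V1f_sq ha hε0.le]
    rw [h1]
    simp only [Pi.add_apply]
    have h3 : ε * (a x ^ 2 * b x ^ 2) ≤ a x ^ 2 * b x ^ 2 := by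
      nlinarith [sq_nonneg (a x * b x)]
    have hε2 : ε ^ 2 ≤ 1 := by nlinarith
    have h4 : ε ^ 2 * b x ^ 4 ≤ b x ^ 4 := by
      calc ε ^ 2 * b x ^ 4 ≤ 1 * b x ^ 4 := mul_le_mul_of_nonneg_right hε2 (by positivity)
        _ = b x ^ 4 := one_mul _
    nlinarith [sq_nonneg (a x ^ 2 - b x ^ 2)]
  have hl4c : Integrable (fun x => V1f c b ε x ^ 4) := by
    apply Integrable.mono' ((hA.l4_m1.const_mul 2).add hA.l4_0)
      (((hsmm.continuous.pow 4)).aestronglyMeasurable)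
    filter_upwards with x
    simp only [Pi.pow_apply]
    rw [Real.norm_eq_abs, abs_of_nonneg (by positivity)]
    have h1 : V1f c b ε x ^ 4 = (c x ^ 2 + ε / 2 * b x ^ 2) ^ 2 := by
      rw [show (4:ℕ) = 2 * 2 from rfl, pow_mul, V1f_sq hc hε0.le]
    rw [h1]
    simp only [Pi.add_apply]
    have h3 : ε * (c x ^ 2 * b x ^ 2) ≤ c x ^ 2 * b x ^ 2 := by
      nlinarith [sq_nonneg (c x * b x)]
    have hε2 : ε ^ 2 ≤ 1 := by nlinarith
    have h4 : ε ^ 2 * b x ^ 4 ≤ b x ^ 4 := by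
      calc ε ^ 2 * b x ^ 4 ≤ 1 * b x ^ 4 := mul_le_mul_of_nonneg_right hε2 (by positivity)
        _ = b x ^ 4 := one_mul _
    nlinarith [sq_nonneg (c x ^ 2 - b x ^ 2)]
  have hl40 : Integrable (fun x => V0f b ε x ^ 4) := by
    have : (fun x => V0f b ε x ^ 4) = fun x => (1 - ε) ^ 2 * b x ^ 4 := by
      funext x
      rw [show V0f b ε x ^ 4 = (V0f b ε x ^ 2) ^ 2 by ring, V0f_sq hε1, mul_pow]
      ring
    rw [this]
    exact hA.l4_0.const_mul ((1 - ε) ^ 2)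
  have hnsq : ∀ x, nsq (V1f a b ε) (V0f b ε) (V1f c b ε) x = nsq a b c x :=
    nsq_V ha hc hε0.le hε1
  refine ⟨hsm1, hsm0, hsmm, fun x => Real.sqrt_nonneg _,
    fun x => mul_nonneg (Real.sqrt_nonneg _) (hA.nonneg0 x), fun x => Real.sqrt_nonneg _,
    hl2a, ?_, hl2c, hgrad1, hgrad0, hgradm, hl4a, hl40, hl4c, ?_, ?_, ?_⟩
  · have : (fun x => V0f b ε x ^ 2) = fun x => (1 - ε) * b x ^ 2 :=
      funext fun x => V0f_sq hε1 x
    rw [this]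
    exact hA.l2_0.const_mul (1 - ε)
  · have : (fun x => Vp x * nsq (V1f a b ε) (V0f b ε) (V1f c b ε) x)
        = fun x => Vp x * nsq a b c x := funext fun x => by rw [hnsq x]
    rw [this]
    exact hA.pot
  · rw [show (fun x => nsq (V1f a b ε) (V0f b ε) (V1f c b ε) x) = fun x => nsq a b c x from
      funext hnsq]
    exact hA.mass
  · have : (fun x => V1f a b ε x ^ 2 - V1f c b ε x ^ 2) = fun x => a x ^ 2 - c x ^ 2 := by
      funext x
      rw [V1f_sq ha hε0.le, V1f_sq hc hε0.le]
      ring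
    rw [this]
    exact hA.magnetization

lemma integrable_energy_integrand {Vp : E3 → ℝ} {M : ℝ} {a b c : E3 → ℝ}
    (hA : Admissible Vp M a b c) (βn βs q : ℝ) :
    Integrable (fun x =>
      (‖gradient a x‖ ^ 2 + ‖gradient b x‖ ^ 2 + ‖gradient c x‖ ^ 2
      + Vp x * nsq a b c x
      + βn * (nsq a b c x) ^ 2
      + βs * (2 * b x ^ 2 * (a x - c x) ^ 2 + (a x ^ 2 - c x ^ 2) ^ 2)
      + q * (a x ^ 2 + c x ^ 2))) := by
  have hca := hA.smooth1.continuous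
  have hcb := hA.smooth0.continuous
  have hcc := hA.smoothm1.continuous
  have hl4 : Integrable (fun x => a x ^ 4 + b x ^ 4 + c x ^ 4) :=
    (hA.l4_1.add hA.l4_0).add hA.l4_m1
  have hnsq2 : Integrable (fun x => (nsq a b c x) ^ 2) := by
    apply Integrable.mono' (hl4.const_mul 3)
    · exact ((((hca.pow 2).add (hcb.pow 2)).add (hcc.pow 2)).pow 2).aestronglyMeasurable
    filter_upwards with x
    rw [Real.norm_eq_abs, abs_of_nonneg (sq_nonneg _), nsq]
    nlinarith [sq_nonneg (a x ^ 2 - b x ^ 2), sq_nonneg (b x ^ 2 - c x ^ 2),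
      sq_nonneg (a x ^ 2 - c x ^ 2)]
  have hbs : Integrable (fun x => 2 * b x ^ 2 * (a x - c x) ^ 2 + (a x ^ 2 - c x ^ 2) ^ 2) := by
    apply Integrable.mono' (hl4.const_mul 4)
    · exact ((((continuous_const.mul (hcb.pow 2)).mul ((hca.sub hcc).pow 2)).add
        (((hca.pow 2).sub (hcc.pow 2)).pow 2))).aestronglyMeasurable
    filter_upwards with x
    rw [Real.norm_eq_abs, abs_of_nonneg (by positivity)]
    nlinarith [sq_nonneg (a x ^ 2 - b x ^ 2), sq_nonneg (b x ^ 2 - c x ^ 2),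
      sq_nonneg (a x ^ 2 - c x ^ 2), sq_nonneg (a x * b x), sq_nonneg (b x * c x),
      sq_nonneg (a x * c x), sq_nonneg ((a x - c x) * b x), sq_nonneg (a x + c x),
      sq_nonneg (a x - c x)]
  exact ((((((hA.grad2_1.add hA.grad2_0).add hA.grad2_m1).add hA.pot).add
    (hnsq2.const_mul βn)).add (hbs.const_mul βs)).add ((hA.l2_1.add hA.l2_m1).const_mul q))

def gfun (a b c : E3 → ℝ) (ε : ℝ) (x : E3) : ℝ :=
  1 / 2 * (Sfun a b x / (a x ^ 2 + ε / 2 * b x ^ 2) + Sfun c b x / (c x ^ 2 + ε / 2 * b x ^ 2))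

def hfun (a b c : E3 → ℝ) (βs ε : ℝ) (x : E3) : ℝ :=
  2 * βs * b x ^ 2 * ((a x - c x) ^ 2 - (1 - ε) * (V1f a b ε x - V1f c b ε x) ^ 2) / ε

lemma normGradSq_V1f {a b : E3 → ℝ} (ha : ContDiff ℝ 1 a) (hb : ContDiff ℝ 1 b)
    (ε : ℝ) (x : E3) (hx : 0 < a x ^ 2 + ε / 2 * b x ^ 2) :
    ‖gradient (V1f a b ε) x‖ ^ 2 =
      ‖gradient a x‖ ^ 2 + ε / 2 * ‖gradient b x‖ ^ 2 -
        ε / 2 * (Sfun a b x / (a x ^ 2 + ε / 2 * b x ^ 2)) := by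
  have h := normGradSq_sqrt_comb ha hb ε x hx
  rw [Sfun]
  rw [show V1f a b ε = fun y => Real.sqrt (a y ^ 2 + ε / 2 * b y ^ 2) from rfl, h]
  ring

lemma energy_integrand_diff {a b c : E3 → ℝ} (ha1 : ContDiff ℝ 1 a) (hb1 : ContDiff ℝ 1 b)
    (hc1 : ContDiff ℝ 1 c) (hapos : ∀ x, 0 < a x) (hcpos : ∀ x, 0 < c x)
    {ε : ℝ} (hε0 : 0 < ε) (hε1 : ε ≤ 1) (Vp : E3 → ℝ) (βn βs q : ℝ) (x : E3) :
    (‖gradient (V1f a b ε) x‖ ^ 2 + ‖gradient (V0f b ε) x‖ ^ 2 + ‖gradient (V1f c b ε) x‖ ^ 2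
      + Vp x * nsq (V1f a b ε) (V0f b ε) (V1f c b ε) x
      + βn * (nsq (V1f a b ε) (V0f b ε) (V1f c b ε) x) ^ 2
      + βs * (2 * V0f b ε x ^ 2 * (V1f a b ε x - V1f c b ε x) ^ 2
          + (V1f a b ε x ^ 2 - V1f c b ε x ^ 2) ^ 2)
      + q * (V1f a b ε x ^ 2 + V1f c b ε x ^ 2))
    - (‖gradient a x‖ ^ 2 + ‖gradient b x‖ ^ 2 + ‖gradient c x‖ ^ 2
      + Vp x * nsq a b c x
      + βn * (nsq a b c x) ^ 2
      + βs * (2 * b x ^ 2 * (a x - c x) ^ 2 + (a x ^ 2 - c x ^ 2) ^ 2)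
      + q * (a x ^ 2 + c x ^ 2))
    = ε * (q * b x ^ 2 - gfun a b c ε x - hfun a b c βs ε x) := by
  have hw1 : 0 < a x ^ 2 + ε / 2 * b x ^ 2 := wpos b hapos hε0.le x
  have hwm : 0 < c x ^ 2 + ε / 2 * b x ^ 2 := wpos b hcpos hε0.le x
  rw [normGradSq_V1f ha1 hb1 ε x hw1, normGradSq_V1f hc1 hb1 ε x hwm,
    normGradSq_V0f hb1 hε1 x, nsq_V hapos hcpos hε0.le hε1,
    V1f_sq hapos hε0.le, V1f_sq hcpos hε0.le, V0f_sq hε1, gfun, hfun]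
  set s1 := Sfun a b x / (a x ^ 2 + ε / 2 * b x ^ 2) with hs1
  set s2 := Sfun c b x / (c x ^ 2 + ε / 2 * b x ^ 2) with hs2
  field_simp
  ring

def g0f (a b c : E3 → ℝ) (x : E3) : ℝ :=
  1 / 2 * (Sfun a b x / a x ^ 2 + Sfun c b x / c x ^ 2)

def h0f (a b c : E3 → ℝ) (βs : ℝ) (x : E3) : ℝ :=
  βs * (b x ^ 2 * (a x - c x) ^ 2 * (2 + b x ^ 2 / (a x * c x)))

lemma hfun_eq {a b c : E3 → ℝ} (hapos : ∀ x, 0 < a x) (hcpos : ∀ x, 0 < c x)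
    (βs : ℝ) {ε : ℝ} (hε0 : 0 < ε) (x : E3) :
    hfun a b c βs ε x =
      2 * βs * (b x ^ 2 * ((a x - c x) ^ 2 *
        (b x ^ 2 * (V1f a b ε x * V1f c b ε x + a x * c x) + b x ^ 2 * (a x ^ 2 + c x ^ 2)
          + ε * b x ^ 4 / 2
          + (a x + c x) ^ 2 * (V1f a b ε x * V1f c b ε x + a x * c x))))
      / ((V1f a b ε x * V1f c b ε x + a x * c x) * (V1f a b ε x + V1f c b ε x) ^ 2) := by
  have hA2 : V1f a b ε x ^ 2 = a x ^ 2 + ε / 2 * b x ^ 2 := V1f_sq hapos hε0.le x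
  have hC2 : V1f c b ε x ^ 2 = c x ^ 2 + ε / 2 * b x ^ 2 := V1f_sq hcpos hε0.le x
  have hAge : a x ≤ V1f a b ε x := V1f_ge hapos hε0.le x
  have hCge : c x ≤ V1f c b ε x := V1f_ge hcpos hε0.le x
  have hApos : 0 < V1f a b ε x := lt_of_lt_of_le (hapos x) hAge
  have hCpos : 0 < V1f c b ε x := lt_of_lt_of_le (hcpos x) hCge
  have hP : 0 < V1f a b ε x * V1f c b ε x + a x * c x :=
    add_pos (mul_pos hApos hCpos) (mul_pos (hapos x) (hcpos x))
  have hS : 0 < (V1f a b ε x + V1f c b ε x) ^ 2 := pow_pos (add_pos hApos hCpos) 2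
  have hD2 : (V1f a b ε x * V1f c b ε x + a x * c x) * (V1f a b ε x + V1f c b ε x) ^ 2 ≠ 0 :=
    (mul_pos hP hS).ne'
  rw [hfun, div_eq_div_iff hε0.ne' hD2]
  have hsub1 : (V1f a b ε x - V1f c b ε x) ^ 2 =
      (a x ^ 2 + ε / 2 * b x ^ 2) + (c x ^ 2 + ε / 2 * b x ^ 2)
        - 2 * (V1f a b ε x * V1f c b ε x) := by linear_combination hA2 + hC2
  have hsub2 : (V1f a b ε x + V1f c b ε x) ^ 2 =
      (a x ^ 2 + ε / 2 * b x ^ 2) + (c x ^ 2 + ε / 2 * b x ^ 2)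
        + 2 * (V1f a b ε x * V1f c b ε x) := by linear_combination hA2 + hC2
  have hACs : (V1f a b ε x * V1f c b ε x) ^ 2 =
      (a x ^ 2 + ε / 2 * b x ^ 2) * (c x ^ 2 + ε / 2 * b x ^ 2) := by
    rw [mul_pow, hA2, hC2]
  rw [hsub1, hsub2]
  set s := V1f a b ε x * V1f c b ε x with hsdef
  linear_combination (2 * βs * b x ^ 2 *
    (4 * s - 4 * ε * s + 2 * c x ^ 2 - 4 * a x * c x * ε + 2 * a x ^ 2)) * hACs

lemma gfun_nonneg {a b c : E3 → ℝ} {ε : ℝ} (hε : 0 ≤ ε) (x : E3) : 0 ≤ gfun a b c ε x := by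
  rw [gfun, Sfun, Sfun]
  have h1 : (0:ℝ) ≤ 1 / 2 := by norm_num
  have hd1 : (0:ℝ) ≤ a x ^ 2 + ε / 2 * b x ^ 2 :=
    add_nonneg (sq_nonneg _) (mul_nonneg (by linarith) (sq_nonneg _))
  have hd2 : (0:ℝ) ≤ c x ^ 2 + ε / 2 * b x ^ 2 :=
    add_nonneg (sq_nonneg _) (mul_nonneg (by linarith) (sq_nonneg _))
  exact mul_nonneg h1 (add_nonneg (div_nonneg (sq_nonneg _) hd1)
    (div_nonneg (sq_nonneg _) hd2))

lemma sq_le_of_sq_sub {A C av cv : ℝ} (hav : 0 < av) (hcv : 0 < cv) (hA : av ≤ A) (hC : cv ≤ C)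
    (hsq : A ^ 2 - C ^ 2 = av ^ 2 - cv ^ 2) : (A - C) ^ 2 ≤ (av - cv) ^ 2 := by
  have hAC0 : 0 < A + C := by linarith
  have hACpos : 0 < (A + C) ^ 2 := pow_pos hAC0 2
  have h1 : (A - C) ^ 2 * (A + C) ^ 2 = (av - cv) ^ 2 * (av + cv) ^ 2 := by
    linear_combination (A ^ 2 - C ^ 2 + av ^ 2 - cv ^ 2) * hsq
  have h2 : (av + cv) ^ 2 ≤ (A + C) ^ 2 := by nlinarith
  nlinarith [sq_nonneg (av - cv), sq_nonneg (A - C)]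

lemma hfun_nonneg {a b c : E3 → ℝ} (hapos : ∀ x, 0 < a x) (hcpos : ∀ x, 0 < c x)
    {βs : ℝ} (hβs : 0 ≤ βs) {ε : ℝ} (hε0 : 0 < ε) (hε1 : ε ≤ 1) (x : E3) :
    0 ≤ hfun a b c βs ε x := by
  rw [hfun]
  apply div_nonneg _ hε0.le
  apply mul_nonneg (mul_nonneg (mul_nonneg (by norm_num) hβs) (sq_nonneg _))
  rw [sub_nonneg]
  have hkey : (V1f a b ε x - V1f c b ε x) ^ 2 ≤ (a x - c x) ^ 2 := by
    apply sq_le_of_sq_sub (hapos x) (hcpos x) (V1f_ge hapos hε0.le x) (V1f_ge hcpos hε0.le x)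
    rw [V1f_sq hapos hε0.le, V1f_sq hcpos hε0.le]
    ring
  calc (1 - ε) * (V1f a b ε x - V1f c b ε x) ^ 2
      ≤ 1 * (V1f a b ε x - V1f c b ε x) ^ 2 := by
        apply mul_le_mul_of_nonneg_right (by linarith) (sq_nonneg _)
    _ = (V1f a b ε x - V1f c b ε x) ^ 2 := one_mul _
    _ ≤ (a x - c x) ^ 2 := hkey

lemma eps_pos (n : ℕ) : (0:ℝ) < 1 / ((n:ℝ) + 1) := by positivity

lemma eps_le_one (n : ℕ) : (1:ℝ) / ((n:ℝ) + 1) ≤ 1 := by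
  rw [div_le_one (by positivity)]
  simp [Nat.cast_nonneg]

lemma tendsto_gfun {a b c : E3 → ℝ} (hapos : ∀ x, 0 < a x) (hcpos : ∀ x, 0 < c x) (x : E3) :
    Filter.Tendsto (fun n : ℕ => gfun a b c (1 / ((n:ℝ) + 1)) x) Filter.atTop
      (nhds (g0f a b c x)) := by
  have h0 : Filter.Tendsto (fun n : ℕ => (1:ℝ) / ((n:ℝ) + 1)) Filter.atTop (nhds 0) :=
    tendsto_one_div_add_atTop_nhds_zero_nat
  set F : ℝ → ℝ := fun e => 1 / 2 *
    (Sfun a b x / (a x ^ 2 + e / 2 * b x ^ 2) + Sfun c b x / (c x ^ 2 + e / 2 * b x ^ 2)) with hF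
  have hd1 : Continuous (fun e : ℝ => a x ^ 2 + e / 2 * b x ^ 2) := by continuity
  have hd2 : Continuous (fun e : ℝ => c x ^ 2 + e / 2 * b x ^ 2) := by continuity
  have hne1 : a x ^ 2 + (0:ℝ) / 2 * b x ^ 2 ≠ 0 := by
    have := hapos x; positivity
  have hne2 : c x ^ 2 + (0:ℝ) / 2 * b x ^ 2 ≠ 0 := by
    have := hcpos x; positivity
  have hFc : ContinuousAt F 0 := by
    apply ContinuousAt.mul continuousAt_const
    exact ((continuousAt_const.div hd1.continuousAt hne1).add
      (continuousAt_const.div hd2.continuousAt hne2))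
  have hcomp := hFc.tendsto.comp h0
  have hval : F 0 = g0f a b c x := by
    rw [hF, g0f]
    norm_num
  rw [hval] at hcomp
  exact hcomp

lemma tendsto_hfun {a b c : E3 → ℝ} (hapos : ∀ x, 0 < a x) (hcpos : ∀ x, 0 < c x)
    (βs : ℝ) (x : E3) :
    Filter.Tendsto (fun n : ℕ => hfun a b c βs (1 / ((n:ℝ) + 1)) x) Filter.atTop
      (nhds (h0f a b c βs x)) := by
  have h0 : Filter.Tendsto (fun n : ℕ => (1:ℝ) / ((n:ℝ) + 1)) Filter.atTop (nhds 0) :=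
    tendsto_one_div_add_atTop_nhds_zero_nat
  set A : ℝ → ℝ := fun e => Real.sqrt (a x ^ 2 + e / 2 * b x ^ 2) with hAdef
  set C : ℝ → ℝ := fun e => Real.sqrt (c x ^ 2 + e / 2 * b x ^ 2) with hCdef
  have hA : Continuous A := Real.continuous_sqrt.comp (by continuity)
  have hC : Continuous C := Real.continuous_sqrt.comp (by continuity)
  set Φ : ℝ → ℝ := fun e =>
    2 * βs * (b x ^ 2 * ((a x - c x) ^ 2 *
      (b x ^ 2 * (A e * C e + a x * c x) + b x ^ 2 * (a x ^ 2 + c x ^ 2)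
        + e * b x ^ 4 / 2 + (a x + c x) ^ 2 * (A e * C e + a x * c x))))
    / ((A e * C e + a x * c x) * (A e + C e) ^ 2) with hΦdef
  have hP : Continuous (fun e : ℝ => A e * C e + a x * c x) := (hA.mul hC).add continuous_const
  have hden : Continuous (fun e : ℝ => (A e * C e + a x * c x) * (A e + C e) ^ 2) :=
    hP.mul ((hA.add hC).pow 2)
  have hnum : Continuous (fun e : ℝ =>
      2 * βs * (b x ^ 2 * ((a x - c x) ^ 2 *
        (b x ^ 2 * (A e * C e + a x * c x) + b x ^ 2 * (a x ^ 2 + c x ^ 2)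
          + e * b x ^ 4 / 2 + (a x + c x) ^ 2 * (A e * C e + a x * c x))))) := by
    apply continuous_const.mul
    apply continuous_const.mul
    apply continuous_const.mul
    exact (((continuous_const.mul hP).add continuous_const).add
      ((continuous_id.mul continuous_const).div_const 2)).add (continuous_const.mul hP)
  have hA0 : A 0 = a x := by
    rw [hAdef]
    norm_num
    exact Real.sqrt_sq (hapos x).le
  have hC0 : C 0 = c x := by
    rw [hCdef]
    norm_num
    exact Real.sqrt_sq (hcpos x).le
  have hden0 : (A 0 * C 0 + a x * c x) * (A 0 + C 0) ^ 2 ≠ 0 := by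
    rw [hA0, hC0]
    have h1 := hapos x
    have h2 := hcpos x
    positivity
  have hΦc : ContinuousAt Φ 0 :=
    ContinuousAt.div hnum.continuousAt hden.continuousAt hden0
  have hcomp := hΦc.tendsto.comp h0
  have hval : Φ 0 = h0f a b c βs x := by
    rw [hΦdef]
    simp only []
    rw [hA0, hC0, h0f]
    have h1 := (hapos x).ne'
    have h2 := (hcpos x).ne'
    have h3 := hapos x
    have h4 := hcpos x
    field_simp
    ring
  rw [hval] at hcomp
  apply hcomp.congr
  intro n
  simp only [Function.comp]
  exact (hfun_eq hapos hcpos βs (eps_pos n) x).symm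

lemma g0f_nonneg {a b c : E3 → ℝ} (x : E3) : 0 ≤ g0f a b c x := by
  rw [g0f, Sfun, Sfun]
  exact mul_nonneg (by norm_num) (add_nonneg (div_nonneg (sq_nonneg _) (sq_nonneg _))
    (div_nonneg (sq_nonneg _) (sq_nonneg _)))

lemma h0f_nonneg {a b c : E3 → ℝ} (hapos : ∀ x, 0 < a x) (hcpos : ∀ x, 0 < c x)
    {βs : ℝ} (hβs : 0 ≤ βs) (x : E3) : 0 ≤ h0f a b c βs x := by
  rw [h0f]
  apply mul_nonneg hβs
  apply mul_nonneg (mul_nonneg (sq_nonneg _) (sq_nonneg _))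
  have : 0 ≤ b x ^ 2 / (a x * c x) :=
    div_nonneg (sq_nonneg _) (mul_nonneg (hapos x).le (hcpos x).le)
  linarith

lemma sfun_continuous {a b : E3 → ℝ} (ha : ContDiff ℝ 1 a) (hb : ContDiff ℝ 1 b) :
    Continuous (fun x => Sfun a b x) := by
  have : Continuous (fun x => a x • gradient b x - b x • gradient a x) :=
    (ha.continuous.smul (contDiff_grad_continuous hb)).sub
      (hb.continuous.smul (contDiff_grad_continuous ha))
  exact this.norm.pow 2

lemma g0f_continuous {a b c : E3 → ℝ} (ha : ContDiff ℝ 1 a) (hb : ContDiff ℝ 1 b)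
    (hc : ContDiff ℝ 1 c) (hapos : ∀ x, 0 < a x) (hcpos : ∀ x, 0 < c x) :
    Continuous (g0f a b c) := by
  apply continuous_const.mul
  exact ((sfun_continuous ha hb).div (ha.continuous.pow 2)
      fun x => pow_ne_zero 2 (hapos x).ne').add
    ((sfun_continuous hc hb).div (hc.continuous.pow 2) fun x => pow_ne_zero 2 (hcpos x).ne')

lemma h0f_continuous {a b c : E3 → ℝ} (ha : ContDiff ℝ 1 a) (hb : ContDiff ℝ 1 b)
    (hc : ContDiff ℝ 1 c) (hapos : ∀ x, 0 < a x) (hcpos : ∀ x, 0 < c x) (βs : ℝ) :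
    Continuous (h0f a b c βs) := by
  apply continuous_const.mul
  apply Continuous.mul ((hb.continuous.pow 2).mul ((ha.continuous.sub hc.continuous).pow 2))
  exact continuous_const.add ((hb.continuous.pow 2).div (ha.continuous.mul hc.continuous)
    fun x => (mul_pos (hapos x) (hcpos x)).ne')

lemma step_bound {Vp : E3 → ℝ} {βn βs q M : ℝ} {u1 u0 um1 : E3 → ℝ}
    (hu : IsGroundState Vp βn βs q M u1 u0 um1)
    (hu1pos : ∀ x, 0 < u1 x) (hum1pos : ∀ x, 0 < um1 x)
    {ε : ℝ} (hε0 : 0 < ε) (hε1 : ε ≤ 1) :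
    Integrable (fun x => gfun u1 u0 um1 ε x + hfun u1 u0 um1 βs ε x) ∧
      (∫ x : E3, (gfun u1 u0 um1 ε x + hfun u1 u0 um1 βs ε x)) ≤ q * ∫ x : E3, u0 x ^ 2 := by
  obtain ⟨hA, hmin⟩ := hu
  have hAd := admissible_family hA hu1pos hum1pos hε0 hε1
  have hEn := hmin _ _ _ hAd
  have IFε := integrable_energy_integrand hAd βn βs q
  have IF0 := integrable_energy_integrand hA βn βs q
  rw [energy, energy] at hEn
  have hid := energy_integrand_diff hA.smooth1 hA.smooth0 hA.smoothm1 hu1pos hum1pos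
    hε0 hε1 Vp βn βs q
  have hφeq : (fun x => gfun u1 u0 um1 ε x + hfun u1 u0 um1 βs ε x) =
      fun x => q * u0 x ^ 2 - ε⁻¹ *
        ((‖gradient (V1f u1 u0 ε) x‖ ^ 2 + ‖gradient (V0f u0 ε) x‖ ^ 2
          + ‖gradient (V1f um1 u0 ε) x‖ ^ 2
          + Vp x * nsq (V1f u1 u0 ε) (V0f u0 ε) (V1f um1 u0 ε) x
          + βn * (nsq (V1f u1 u0 ε) (V0f u0 ε) (V1f um1 u0 ε) x) ^ 2
          + βs * (2 * V0f u0 ε x ^ 2 * (V1f u1 u0 ε x - V1f um1 u0 ε x) ^ 2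
              + (V1f u1 u0 ε x ^ 2 - V1f um1 u0 ε x ^ 2) ^ 2)
          + q * (V1f u1 u0 ε x ^ 2 + V1f um1 u0 ε x ^ 2))
        - (‖gradient u1 x‖ ^ 2 + ‖gradient u0 x‖ ^ 2 + ‖gradient um1 x‖ ^ 2
          + Vp x * nsq u1 u0 um1 x
          + βn * (nsq u1 u0 um1 x) ^ 2
          + βs * (2 * u0 x ^ 2 * (u1 x - um1 x) ^ 2 + (u1 x ^ 2 - um1 x ^ 2) ^ 2)
          + q * (u1 x ^ 2 + um1 x ^ 2))) := by
    funext x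
    rw [hid x]
    field_simp
    ring
  have Iφ : Integrable (fun x => gfun u1 u0 um1 ε x + hfun u1 u0 um1 βs ε x) := by
    rw [hφeq]
    exact (hA.l2_0.const_mul q).sub ((IFε.sub IF0).const_mul ε⁻¹)
  refine ⟨Iφ, ?_⟩
  have h1 : 0 ≤ ∫ x : E3, (((‖gradient (V1f u1 u0 ε) x‖ ^ 2 + ‖gradient (V0f u0 ε) x‖ ^ 2
          + ‖gradient (V1f um1 u0 ε) x‖ ^ 2
          + Vp x * nsq (V1f u1 u0 ε) (V0f u0 ε) (V1f um1 u0 ε) x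
          + βn * (nsq (V1f u1 u0 ε) (V0f u0 ε) (V1f um1 u0 ε) x) ^ 2
          + βs * (2 * V0f u0 ε x ^ 2 * (V1f u1 u0 ε x - V1f um1 u0 ε x) ^ 2
              + (V1f u1 u0 ε x ^ 2 - V1f um1 u0 ε x ^ 2) ^ 2)
          + q * (V1f u1 u0 ε x ^ 2 + V1f um1 u0 ε x ^ 2))
        - (‖gradient u1 x‖ ^ 2 + ‖gradient u0 x‖ ^ 2 + ‖gradient um1 x‖ ^ 2
          + Vp x * nsq u1 u0 um1 x
          + βn * (nsq u1 u0 um1 x) ^ 2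
          + βs * (2 * u0 x ^ 2 * (u1 x - um1 x) ^ 2 + (u1 x ^ 2 - um1 x ^ 2) ^ 2)
          + q * (u1 x ^ 2 + um1 x ^ 2)))) := by
    rw [integral_sub IFε IF0]
    linarith
  have h2 : ∫ x : E3, (((‖gradient (V1f u1 u0 ε) x‖ ^ 2 + ‖gradient (V0f u0 ε) x‖ ^ 2
          + ‖gradient (V1f um1 u0 ε) x‖ ^ 2
          + Vp x * nsq (V1f u1 u0 ε) (V0f u0 ε) (V1f um1 u0 ε) x
          + βn * (nsq (V1f u1 u0 ε) (V0f u0 ε) (V1f um1 u0 ε) x) ^ 2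
          + βs * (2 * V0f u0 ε x ^ 2 * (V1f u1 u0 ε x - V1f um1 u0 ε x) ^ 2
              + (V1f u1 u0 ε x ^ 2 - V1f um1 u0 ε x ^ 2) ^ 2)
          + q * (V1f u1 u0 ε x ^ 2 + V1f um1 u0 ε x ^ 2))
        - (‖gradient u1 x‖ ^ 2 + ‖gradient u0 x‖ ^ 2 + ‖gradient um1 x‖ ^ 2
          + Vp x * nsq u1 u0 um1 x
          + βn * (nsq u1 u0 um1 x) ^ 2
          + βs * (2 * u0 x ^ 2 * (u1 x - um1 x) ^ 2 + (u1 x ^ 2 - um1 x ^ 2) ^ 2)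
          + q * (u1 x ^ 2 + um1 x ^ 2))))
      = ε * ((q * ∫ x : E3, u0 x ^ 2) -
          ∫ x : E3, (gfun u1 u0 um1 ε x + hfun u1 u0 um1 βs ε x)) := by
    have e1 : ∀ x : E3, (((‖gradient (V1f u1 u0 ε) x‖ ^ 2 + ‖gradient (V0f u0 ε) x‖ ^ 2
          + ‖gradient (V1f um1 u0 ε) x‖ ^ 2
          + Vp x * nsq (V1f u1 u0 ε) (V0f u0 ε) (V1f um1 u0 ε) x
          + βn * (nsq (V1f u1 u0 ε) (V0f u0 ε) (V1f um1 u0 ε) x) ^ 2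
          + βs * (2 * V0f u0 ε x ^ 2 * (V1f u1 u0 ε x - V1f um1 u0 ε x) ^ 2
              + (V1f u1 u0 ε x ^ 2 - V1f um1 u0 ε x ^ 2) ^ 2)
          + q * (V1f u1 u0 ε x ^ 2 + V1f um1 u0 ε x ^ 2))
        - (‖gradient u1 x‖ ^ 2 + ‖gradient u0 x‖ ^ 2 + ‖gradient um1 x‖ ^ 2
          + Vp x * nsq u1 u0 um1 x
          + βn * (nsq u1 u0 um1 x) ^ 2
          + βs * (2 * u0 x ^ 2 * (u1 x - um1 x) ^ 2 + (u1 x ^ 2 - um1 x ^ 2) ^ 2)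
          + q * (u1 x ^ 2 + um1 x ^ 2))))
        = ε * (q * u0 x ^ 2 - (gfun u1 u0 um1 ε x + hfun u1 u0 um1 βs ε x)) := by
      intro x
      rw [hid x]
      ring
    rw [integral_congr_ae (Filter.Eventually.of_forall e1), integral_const_mul]
    congr 1
    rw [integral_sub (hA.l2_0.const_mul q) Iφ, integral_const_mul]
  rw [h2] at h1
  nlinarith

/-- the inequality satisfied by a three-component ground state. -/
theorem three_component_ground_state_inequality (V : E3 → ℝ) (βn βs q M : ℝ)
    (hV : TrapPotential V) (hβn : 0 < βn) (hβs : 0 < βs) (hq : 0 ≤ q)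
    (hM0 : 0 < M) (hM1 : M < 1) (u1 u0 um1 : E3 → ℝ)
    (hu : IsGroundState V βn βs q M u1 u0 um1)
    (hu1pos : ∀ x, 0 < u1 x) (hum1pos : ∀ x, 0 < um1 x) :
    Integrable (fun x => u0 x ^ 2 * (u1 x - um1 x) ^ 2 * (2 + u0 x ^ 2 / (u1 x * um1 x))) ∧
    Integrable (fun x => Sfun u1 u0 x / u1 x ^ 2 + Sfun um1 u0 x / um1 x ^ 2) ∧
    q * (∫ x : E3, u0 x ^ 2)
      ≥ βs * (∫ x : E3, u0 x ^ 2 * (u1 x - um1 x) ^ 2 * (2 + u0 x ^ 2 / (u1 x * um1 x)))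
        + (1 / 2) * (∫ x : E3, Sfun u1 u0 x / u1 x ^ 2 + Sfun um1 u0 x / um1 x ^ 2) := by
  have hA := hu.1
  set B := q * ∫ x : E3, u0 x ^ 2 with hBdef
  have hBnn : 0 ≤ B := mul_nonneg hq (integral_nonneg fun x => sq_nonneg _)
  have hstep := fun n : ℕ => step_bound hu hu1pos hum1pos (eps_pos n) (eps_le_one n)
  have hφnn' : ∀ (n : ℕ) (x : E3),
      0 ≤ gfun u1 u0 um1 (1 / ((n:ℝ) + 1)) x + hfun u1 u0 um1 βs (1 / ((n:ℝ) + 1)) x :=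
    fun n x => add_nonneg (gfun_nonneg (eps_pos n).le x)
      (hfun_nonneg hu1pos hum1pos hβs.le (eps_pos n) (eps_le_one n) x)
  have hlint : ∀ n : ℕ,
      (∫⁻ x : E3, ENNReal.ofReal (gfun u1 u0 um1 (1 / ((n:ℝ) + 1)) x
        + hfun u1 u0 um1 βs (1 / ((n:ℝ) + 1)) x)) ≤ ENNReal.ofReal B := by
    intro n
    rw [← ofReal_integral_eq_lintegral_ofReal (hstep n).1
      (Filter.Eventually.of_forall (hφnn' n))]
    exact ENNReal.ofReal_le_ofReal (hstep n).2
  have hpt : ∀ x : E3, Filter.liminf (fun n : ℕ =>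
      ENNReal.ofReal (gfun u1 u0 um1 (1 / ((n:ℝ) + 1)) x
        + hfun u1 u0 um1 βs (1 / ((n:ℝ) + 1)) x)) Filter.atTop
      = ENNReal.ofReal (g0f u1 u0 um1 x + h0f u1 u0 um1 βs x) := fun x =>
    Filter.Tendsto.liminf_eq (ENNReal.tendsto_ofReal
      ((tendsto_gfun hu1pos hum1pos x).add (tendsto_hfun hu1pos hum1pos βs x)))
  have hfatou : (∫⁻ x : E3, ENNReal.ofReal (g0f u1 u0 um1 x + h0f u1 u0 um1 βs x))
      ≤ ENNReal.ofReal B := by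
    calc (∫⁻ x : E3, ENNReal.ofReal (g0f u1 u0 um1 x + h0f u1 u0 um1 βs x))
        = ∫⁻ x : E3, Filter.liminf (fun n : ℕ =>
            ENNReal.ofReal (gfun u1 u0 um1 (1 / ((n:ℝ) + 1)) x
              + hfun u1 u0 um1 βs (1 / ((n:ℝ) + 1)) x)) Filter.atTop :=
          lintegral_congr fun x => (hpt x).symm
      _ ≤ Filter.liminf (fun n : ℕ => ∫⁻ x : E3,
            ENNReal.ofReal (gfun u1 u0 um1 (1 / ((n:ℝ) + 1)) x
              + hfun u1 u0 um1 βs (1 / ((n:ℝ) + 1)) x)) Filter.atTop :=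
          lintegral_liminf_le' fun n => ((hstep n).1.aemeasurable).ennreal_ofReal
      _ ≤ Filter.liminf (fun _ : ℕ => ENNReal.ofReal B) Filter.atTop :=
          Filter.liminf_le_liminf (Filter.Eventually.of_forall hlint)
      _ = ENNReal.ofReal B := Filter.liminf_const _
  have hcontg := g0f_continuous hA.smooth1 hA.smooth0 hA.smoothm1 hu1pos hum1pos
  have hconth := h0f_continuous hA.smooth1 hA.smooth0 hA.smoothm1 hu1pos hum1pos βs
  have hcontφ : Continuous (fun x => g0f u1 u0 um1 x + h0f u1 u0 um1 βs x) :=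
    hcontg.add hconth
  have hφnn : ∀ x, 0 ≤ g0f u1 u0 um1 x + h0f u1 u0 um1 βs x := fun x =>
    add_nonneg (g0f_nonneg x) (h0f_nonneg hu1pos hum1pos hβs.le x)
  have Iφ : Integrable (fun x => g0f u1 u0 um1 x + h0f u1 u0 um1 βs x) := by
    refine ⟨hcontφ.aestronglyMeasurable, ?_⟩
    rw [hasFiniteIntegral_iff_ofReal (Filter.Eventually.of_forall hφnn)]
    exact lt_of_le_of_lt hfatou ENNReal.ofReal_lt_top
  have hint_le : (∫ x : E3, (g0f u1 u0 um1 x + h0f u1 u0 um1 βs x)) ≤ B := by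
    rw [integral_eq_lintegral_of_nonneg_ae (Filter.Eventually.of_forall hφnn)
      hcontφ.aestronglyMeasurable]
    calc (∫⁻ x : E3, ENNReal.ofReal (g0f u1 u0 um1 x + h0f u1 u0 um1 βs x)).toReal
        ≤ (ENNReal.ofReal B).toReal := ENNReal.toReal_mono ENNReal.ofReal_ne_top hfatou
      _ = B := ENNReal.toReal_ofReal hBnn
  have Ig : Integrable (g0f u1 u0 um1) := by
    apply Integrable.mono' Iφ hcontg.aestronglyMeasurable
    filter_upwards with x
    rw [Real.norm_eq_abs, abs_of_nonneg (g0f_nonneg x)]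
    linarith [h0f_nonneg (b := u0) hu1pos hum1pos hβs.le x]
  have Ih : Integrable (h0f u1 u0 um1 βs) := by
    have h := Iφ.sub Ig
    have he : ((fun x => g0f u1 u0 um1 x + h0f u1 u0 um1 βs x) - g0f u1 u0 um1)
        = h0f u1 u0 um1 βs := funext fun x => by
      simp only [Pi.sub_apply]
      ring
    rwa [he] at h
  have hT1eq : (fun x : E3 => u0 x ^ 2 * (u1 x - um1 x) ^ 2 * (2 + u0 x ^ 2 / (u1 x * um1 x)))
      = fun x => βs⁻¹ * h0f u1 u0 um1 βs x := by
    funext x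
    rw [h0f]
    field_simp
  have hT2eq : (fun x : E3 => Sfun u1 u0 x / u1 x ^ 2 + Sfun um1 u0 x / um1 x ^ 2)
      = fun x => 2 * g0f u1 u0 um1 x := by
    funext x
    rw [g0f]
    ring
  refine ⟨?_, ?_, ?_⟩
  · rw [hT1eq]
    exact Ih.const_mul _
  · rw [hT2eq]
    exact Ig.const_mul 2
  · rw [hT1eq, hT2eq, integral_const_mul, integral_const_mul]
    have hsum : (∫ x : E3, (g0f u1 u0 um1 x + h0f u1 u0 um1 βs x))
        = (∫ x : E3, g0f u1 u0 um1 x) + ∫ x : E3, h0f u1 u0 um1 βs x :=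
      integral_add Ig Ih
    rw [hsum] at hint_le
    have hβs' : βs * (βs⁻¹ * ∫ x : E3, h0f u1 u0 um1 βs x) = ∫ x : E3, h0f u1 u0 um1 βs x := by
      field_simp
    rw [ge_iff_le, hβs']
    rw [hBdef] at hint_le
    linarith
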